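/- There exists N₀ such that the following holds for all n ≥ N₀. Let q be an odd prime, let a ∈ (ℤ/qℤ)^n with a ∉ 𝓛(n,q), and let ℓ ∈ (ℤ/qℤ)^n be a vector whose support has size s with s ≥ n/(2(log n)²). Then there are at least min{s²/20, s·n/(2(log n)²)} pairs 1 ≤ i < j ≤ n for which ℓ_i·a_j + ℓ_j·a_i ≠ 0 in ℤ/qℤ. -/

import Mathlib

/-- `a ∈ 𝓛(n,q)`: some level set of `a` has size at least `n - n/(log n)²`. -/
def inL (n q : ℕ) (a : Fin n → ZMod q) : Prop :=
  ∃ r : ZMod q,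
    (n : ℝ) - n / (Real.log n) ^ 2 ≤ (Finset.univ.filter (fun i => a i = r)).card

open Finset

lemma two_mul_card_filter_lt {n : ℕ} (B : Finset (Fin n × Fin n))
    (hsym : ∀ p ∈ B, Prod.swap p ∈ B) (hne : ∀ p ∈ B, p.1 ≠ p.2) :
    B.card = 2 * (B.filter fun p => p.1 < p.2).card := by
  classical
  have h1 : (B.filter fun p => p.2 < p.1).card = (B.filter fun p => p.1 < p.2).card := by
    apply Finset.card_bij' (fun p _ => Prod.swap p) (fun p _ => Prod.swap p)
    · intro p hp
      simp only [mem_filter] at hp ⊢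
      exact ⟨hsym p hp.1, hp.2⟩
    · intro p hp
      simp only [mem_filter] at hp ⊢
      exact ⟨hsym p hp.1, hp.2⟩
    · intro p _; simp
    · intro p _; simp
  have h2 : B = (B.filter fun p => p.1 < p.2) ∪ (B.filter fun p => p.2 < p.1) := by
    rw [← Finset.filter_or]
    rw [Finset.filter_true_of_mem]
    intro p hp
    rcases lt_or_gt_of_ne (hne p hp) with h | h
    · exact Or.inl h
    · exact Or.inr h
  have h3 : Disjoint (B.filter fun p => p.1 < p.2) (B.filter fun p => p.2 < p.1) := by
    rw [Finset.disjoint_left]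
    intro p hp hq
    simp only [mem_filter] at hp hq
    exact absurd hq.2 (lt_asymm hp.2)
  have h4 : B.card = (B.filter fun p => p.1 < p.2).card + (B.filter fun p => p.2 < p.1).card := by
    conv_lhs => rw [h2]
    exact Finset.card_union_of_disjoint h3
  omega

lemma forty_le {n : ℕ} (hn : 1700000 ≤ n) : (40:ℝ) ≤ (n:ℝ)/(2*(Real.log n)^2) := by
  have hx : (1700000:ℝ) ≤ (n:ℝ) := by exact_mod_cast hn
  set x := (n:ℝ) with hxdef
  have hx0 : (0:ℝ) < x := by linarith
  set y := x ^ ((1:ℝ)/4) with hy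
  have hy0 : 0 ≤ y := Real.rpow_nonneg hx0.le _
  have hy4 : y ^ (4:ℕ) = x := by
    rw [hy, ← Real.rpow_natCast (x ^ ((1:ℝ)/4)) 4, ← Real.rpow_mul hx0.le]
    norm_num
  have hy36 : (36:ℝ) ≤ y := by
    by_contra h
    push_neg at h
    have : y ^ (4:ℕ) ≤ 36 ^ (4:ℕ) := pow_le_pow_left₀ hy0 h.le 4
    rw [hy4] at this
    norm_num at this
    linarith
  have hlog : Real.log x ≤ 4 * y := by
    have := Real.log_le_rpow_div hx0.le (by norm_num : (0:ℝ) < 1/4)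
    calc Real.log x ≤ x ^ ((1:ℝ)/4) / (1/4) := this
      _ = 4 * y := by rw [hy]; ring
  have hL0 : 0 < Real.log x := Real.log_pos (by linarith)
  rw [le_div_iff₀ (by positivity)]
  have hy2 : (1296:ℝ) ≤ y^2 := by nlinarith
  have h1 : Real.log x ^ 2 ≤ 16 * y^2 := by nlinarith
  have h2 : 1280 * y^2 ≤ y^4 := by nlinarith [sq_nonneg y]
  nlinarith

lemma bad_card_le {K : Type*} [Field K] [Fintype K] [DecidableEq K] {n : ℕ}
    (U : Finset (Fin n)) (c : Fin n → K) (hc : ∀ i ∈ U, c i ≠ 0) (h2 : (2:K) ≠ 0) :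
    2 * (((U ×ˢ U).filter fun p => c p.1 + c p.2 = 0).card : ℝ) ≤ (U.card : ℝ) ^ 2 := by
  classical
  set t := U.card with ht
  set m : K → ℕ := fun v => (U.filter fun i => c i = v).card with hm
  have hm0 : m 0 = 0 := by
    rw [hm]
    simp only [Finset.card_eq_zero, Finset.filter_eq_empty_iff]
    intro i hi
    exact hc i hi
  have hmsum : ∑ v : K, m v = t := by
    rw [ht, hm]
    exact (Finset.card_eq_sum_card_fiberwise (fun i _ => Finset.mem_univ (c i))).symm
  have hmpair : ∀ v : K, m v + m (-v) ≤ t := by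
    intro v
    by_cases hv : v = 0
    · simp [hv, hm0]
    · have hne : v ≠ -v := by
        intro h
        apply hv
        have : (2:K) * v = 0 := by rw [two_mul]; nth_rewrite 2 [h]; ring
        rcases mul_eq_zero.mp this with h' | h'
        · exact absurd h' h2
        · exact h'
      have hdisj : Disjoint (U.filter fun i => c i = v) (U.filter fun i => c i = -v) := by
        rw [Finset.disjoint_left]
        intro i hi hj
        simp only [mem_filter] at hi hj
        exact hne (hi.2.symm.trans hj.2)
      calc m v + m (-v) = ((U.filter fun i => c i = v) ∪ (U.filter fun i => c i = -v)).card :=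
            (Finset.card_union_of_disjoint hdisj).symm
        _ ≤ U.card := Finset.card_le_card (Finset.union_subset (filter_subset _ _) (filter_subset _ _))
  set Bad := (U ×ˢ U).filter fun p => c p.1 + c p.2 = 0 with hBad
  have hbadcard : Bad.card = ∑ v : K, m v * m (-v) := by
    rw [hBad]
    rw [Finset.card_eq_sum_card_fiberwise (f := fun p => c p.1) (t := Finset.univ)
      (fun p _ => Finset.mem_univ _)]
    apply Finset.sum_congr rfl
    intro v _
    have : ((U ×ˢ U).filter fun p => c p.1 + c p.2 = 0).filter (fun p => c p.1 = v)
        = (U.filter fun i => c i = v) ×ˢ (U.filter fun i => c i = -v) := by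
      ext ⟨i, j⟩
      simp only [mem_filter, mem_product]
      constructor
      · rintro ⟨⟨⟨hi, hj⟩, hsum⟩, hv⟩
        refine ⟨⟨hi, hv⟩, hj, ?_⟩
        rw [← hv]; linear_combination hsum
      · rintro ⟨⟨hi, hv⟩, hj, hw⟩
        exact ⟨⟨⟨hi, hj⟩, by rw [hv, hw]; ring⟩, hv⟩
    rw [this, Finset.card_product]
  have e1 : ∑ v : K, ((m (-v) : ℝ))^2 = ∑ v : K, ((m v : ℝ))^2 :=
    Fintype.sum_equiv (Equiv.neg K) _ _ (fun v => rfl)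
  have key1 : ∑ v : K, (m v : ℝ) * (m (-v)) ≤ ∑ v : K, ((m v : ℝ))^2 := by
    have h2' : (2:ℝ) * ∑ v : K, (m v : ℝ) * (m (-v)) ≤ 2 * ∑ v : K, ((m v : ℝ))^2 := by
      calc (2:ℝ) * ∑ v : K, (m v : ℝ) * (m (-v)) = ∑ v : K, 2 * ((m v : ℝ) * (m (-v))) := by
            rw [Finset.mul_sum]
        _ ≤ ∑ v : K, (((m v : ℝ))^2 + ((m (-v) : ℝ))^2) := by
            apply Finset.sum_le_sum
            intro v _
            nlinarith [sq_nonneg ((m v : ℝ) - (m (-v) : ℝ))]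
        _ = 2 * ∑ v : K, ((m v : ℝ))^2 := by
            rw [Finset.sum_add_distrib, e1]; ring
    linarith
  have key2 : ∑ v : K, ((m v : ℝ))^2 + ∑ v : K, (m v : ℝ) * (m (-v)) ≤ (t:ℝ)^2 := by
    have step : ∑ v : K, (((m v : ℝ))^2 + (m v : ℝ) * (m (-v))) ≤ ∑ v : K, (m v : ℝ) * t := by
      apply Finset.sum_le_sum
      intro v _
      have hcast : ((m v : ℝ)) + (m (-v) : ℝ) ≤ (t : ℝ) := by exact_mod_cast hmpair v
      nlinarith [Nat.cast_nonneg (α := ℝ) (m v), Nat.cast_nonneg (α := ℝ) (m (-v))]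
    have hsum' : ∑ v : K, (m v : ℝ) * t = (t:ℝ)^2 := by
      rw [← Finset.sum_mul]
      have : ∑ v : K, (m v : ℝ) = (t : ℝ) := by exact_mod_cast congrArg (Nat.cast (R := ℝ)) hmsum
      rw [this]; ring
    calc ∑ v : K, ((m v : ℝ))^2 + ∑ v : K, (m v : ℝ) * (m (-v))
        = ∑ v : K, (((m v : ℝ))^2 + (m v : ℝ) * (m (-v))) := (Finset.sum_add_distrib).symm
      _ ≤ ∑ v : K, (m v : ℝ) * t := step
      _ = (t:ℝ)^2 := hsum'
  have hbc : (Bad.card : ℝ) = ∑ v : K, (m v : ℝ) * (m (-v)) := by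
    rw [hbadcard]; push_cast; rfl
  linarith [key1, key2, hbc.le, hbc.ge]

/-- There exists `N₀` such that for all `n ≥ N₀`: if `q` is an odd prime,
`a ∉ 𝓛(n,q)` and `ℓ` has support of size `s ≥ n/(2 (log n)²)`, then there are at
least `min {s²/20, s·n/(2 (log n)²)}` pairs `i < j` with `ℓ_i a_j + ℓ_j a_i ≠ 0`. -/
theorem large_support_pairs :
    ∃ N₀ : ℕ, ∀ n : ℕ, N₀ ≤ n → ∀ q : ℕ, q.Prime → q ≠ 2 →
      ∀ a ℓ : Fin n → ZMod q, ¬ inL n q a →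
      (n : ℝ) / (2 * (Real.log n) ^ 2)
          ≤ ((Finset.univ.filter (fun i => ℓ i ≠ 0)).card : ℝ) →
      min (((Finset.univ.filter (fun i => ℓ i ≠ 0)).card : ℝ) ^ 2 / 20)
          ((((Finset.univ.filter (fun i => ℓ i ≠ 0)).card : ℝ) * n)
            / (2 * (Real.log n) ^ 2))
        ≤ ((Finset.univ.filter (fun p : Fin n × Fin n =>
            p.1 < p.2 ∧ ℓ p.1 * a p.2 + ℓ p.2 * a p.1 ≠ 0)).card : ℝ) := by
  classical
  refine ⟨1700000, ?_⟩
  intro n hn q hq hq2 a ℓ hL hsupp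
  haveI : Fact q.Prime := ⟨hq⟩
  haveI : NeZero q := ⟨hq.ne_zero⟩
  set G := (Finset.univ.filter (fun p : Fin n × Fin n =>
            p.1 < p.2 ∧ ℓ p.1 * a p.2 + ℓ p.2 * a p.1 ≠ 0)) with hG
  set S := (Finset.univ.filter (fun i => ℓ i ≠ 0)) with hSdef
  set Tf := ((Finset.univ : Finset (Fin n)).filter (fun i => a i ≠ 0)) with hTfdef
  set U := ((Finset.univ : Finset (Fin n)).filter (fun i => ℓ i ≠ 0 ∧ a i ≠ 0)) with hUdef
  set W := ((Finset.univ : Finset (Fin n)).filter (fun i => ℓ i ≠ 0 ∧ a i = 0)) with hWdef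
  -- 2 ≠ 0 in ZMod q
  have h2 : (2:ZMod q) ≠ 0 := by
    intro h
    have h' : ((2:ℕ) : ZMod q) = 0 := by exact_mod_cast h
    rw [ZMod.natCast_eq_zero_iff] at h'
    have := Nat.le_of_dvd (by norm_num) h'
    have := hq.two_le
    omega
  -- s = t + u
  have hstu : S.card = U.card + W.card := by
    have h := Finset.card_filter_add_card_filter_not (s := S) (p := fun i => a i ≠ 0)
    have e1 : S.filter (fun i => a i ≠ 0) = U := by
      rw [hSdef, hUdef, Finset.filter_filter]
    have e2 : S.filter (fun i => ¬ (a i ≠ 0)) = W := by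
      rw [hSdef, hWdef, Finset.filter_filter]
      simp only [not_not]
    rw [e1, e2] at h
    omega
  -- Tf is large
  have hTf : (n:ℝ)/(Real.log n)^2 < Tf.card := by
    simp only [inL, not_exists, not_le] at hL
    have h0 := hL 0
    have hadd : (Finset.univ.filter (fun i => a i = 0)).card + Tf.card = n := by
      have h := Finset.card_filter_add_card_filter_not
        (s := (Finset.univ : Finset (Fin n))) (p := fun i => a i = 0)
      simpa [hTfdef] using h
    have : (Tf.card : ℝ) = n - (Finset.univ.filter (fun i => a i = 0)).card := by
      have := congrArg (Nat.cast (R := ℝ)) hadd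
      push_cast at this
      linarith
    linarith
  have h40 : (40:ℝ) ≤ (n:ℝ)/(2*(Real.log n)^2) := forty_le hn
  have hs40 : (40:ℝ) ≤ S.card := le_trans h40 hsupp
  have htles : U.card ≤ S.card := by
    apply Finset.card_le_card
    intro i hi
    simp only [hUdef, hSdef, mem_filter] at hi ⊢
    exact ⟨hi.1, hi.2.1⟩
  rcases le_or_gt S.card (2 * U.card) with hcase | hcase
  · -- Case A: quadratic bound inside U
    set c : Fin n → ZMod q := fun i => ℓ i * (a i)⁻¹ with hc
    have hcne : ∀ i ∈ U, c i ≠ 0 := by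
      intro i hi
      simp only [hUdef, mem_filter] at hi
      exact mul_ne_zero hi.2.1 (inv_ne_zero hi.2.2)
    have hbad2 := bad_card_le U c hcne h2
    set Bad := (U ×ˢ U).filter (fun p => c p.1 + c p.2 = 0) with hBadDef
    have hBadsym : ∀ p ∈ Bad, Prod.swap p ∈ Bad := by
      intro p hp
      simp only [hBadDef, mem_filter, mem_product, Prod.fst_swap, Prod.snd_swap] at hp ⊢
      exact ⟨⟨hp.1.2, hp.1.1⟩, by rw [add_comm]; exact hp.2⟩
    have hBadne : ∀ p ∈ Bad, p.1 ≠ p.2 := by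
      intro p hp heq
      simp only [hBadDef, mem_filter, mem_product] at hp
      have h1 : c p.1 ≠ 0 := hcne _ hp.1.1
      apply h1
      have : (2 : ZMod q) * c p.1 = 0 := by
        rw [two_mul]; nth_rewrite 2 [heq]; exact hp.2
      rcases mul_eq_zero.mp this with h' | h'
      · exact absurd h' h2
      · exact h'
    have hBadsplit : Bad.card = 2 * (Bad.filter fun p => p.1 < p.2).card :=
      two_mul_card_filter_lt Bad hBadsym hBadne
    set D := U.offDiag with hD
    have hDsym : ∀ p ∈ D, Prod.swap p ∈ D := by
      intro p hp
      rw [hD, Finset.mem_offDiag] at hp ⊢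
      exact ⟨hp.2.1, hp.1, hp.2.2.symm⟩
    have hDne : ∀ p ∈ D, p.1 ≠ p.2 := by
      intro p hp
      rw [hD, Finset.mem_offDiag] at hp
      exact hp.2.2
    have hDsplit : D.card = 2 * (D.filter fun p => p.1 < p.2).card :=
      two_mul_card_filter_lt D hDsym hDne
    have htt : U.card ≤ U.card * U.card := by
      rcases Nat.eq_zero_or_pos U.card with h | h
      · simp [h]
      · exact Nat.le_mul_of_pos_left _ h
    have hDcard : (D.card : ℝ) = (U.card:ℝ)^2 - U.card := by
      rw [hD, Finset.offDiag_card]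
      push_cast [Nat.cast_sub htt]
      ring
    set AllU := D.filter (fun p => p.1 < p.2) with hAllU
    have hsplit := Finset.card_filter_add_card_filter_not
      (s := AllU) (p := fun p => c p.1 + c p.2 = 0)
    have hBadLteq : AllU.filter (fun p => c p.1 + c p.2 = 0)
        = Bad.filter (fun p => p.1 < p.2) := by
      ext p
      simp only [hAllU, hD, hBadDef, mem_filter, mem_product, Finset.mem_offDiag]
      constructor
      · rintro ⟨⟨⟨h1, h2', _⟩, hlt⟩, hsum⟩
        exact ⟨⟨⟨h1, h2'⟩, hsum⟩, hlt⟩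
      · rintro ⟨⟨⟨h1, h2'⟩, hsum⟩, hlt⟩
        exact ⟨⟨⟨h1, h2', ne_of_lt hlt⟩, hlt⟩, hsum⟩
    set GoodU := AllU.filter (fun p => ¬ (c p.1 + c p.2 = 0)) with hGoodU
    have hGoodsub : GoodU ⊆ G := by
      intro p hp
      simp only [hGoodU, hAllU, hD, mem_filter, Finset.mem_offDiag] at hp
      obtain ⟨⟨⟨hp1, hp2, _⟩, hlt⟩, hsum⟩ := hp
      simp only [hUdef, mem_filter] at hp1 hp2
      rw [hG, mem_filter]
      refine ⟨Finset.mem_univ _, hlt, ?_⟩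
      intro h0
      apply hsum
      show c p.1 + c p.2 = 0
      have ha1 : a p.1 ≠ 0 := hp1.2.2
      have ha2 : a p.2 ≠ 0 := hp2.2.2
      rw [hc]
      simp only
      field_simp
      linear_combination h0
    -- final arithmetic for Case A
    have hGge : (GoodU.card : ℝ) ≤ G.card := by
      exact_mod_cast Finset.card_le_card hGoodsub
    have c1 : (Bad.filter (fun p => p.1 < p.2)).card + GoodU.card = AllU.card := by
      rw [← hBadLteq]
      exact hsplit
    have c2 : 2 * (AllU.card : ℝ) = (U.card:ℝ)^2 - U.card := by
      rw [← hDcard, hDsplit, hAllU]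
      push_cast
      ring
    have c3 : 4 * ((Bad.filter (fun p => p.1 < p.2)).card : ℝ) ≤ (U.card:ℝ)^2 := by
      have : (Bad.card : ℝ) = 2 * ((Bad.filter (fun p => p.1 < p.2)).card : ℝ) := by
        exact_mod_cast hBadsplit
      linarith
    have c1' : ((Bad.filter (fun p => p.1 < p.2)).card : ℝ) + GoodU.card = AllU.card := by
      exact_mod_cast c1
    refine le_trans (min_le_left _ _) ?_
    have hsc : (S.card : ℝ) ≤ 2 * U.card := by exact_mod_cast hcase
    have hts : (U.card : ℝ) ≤ S.card := by exact_mod_cast htles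
    nlinarith [hGge, c1', c2, c3, hs40, hsc, hts]
  · -- Case B: many zero-a support elements
    have hu : S.card + 1 ≤ 2 * W.card := by omega
    have hinj : W.card * Tf.card ≤ G.card := by
      rw [← Finset.card_product]
      apply Finset.card_le_card_of_injOn (fun p => if p.1 < p.2 then p else (p.2, p.1))
      · intro p hp
        rw [Finset.mem_coe]
        rw [Finset.mem_coe, Finset.mem_product] at hp
        obtain ⟨hp1, hp2⟩ := hp
        simp only [hWdef, mem_filter] at hp1
        simp only [hTfdef, mem_filter] at hp2
        obtain ⟨_, hl1, ha1⟩ := hp1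
        obtain ⟨_, ha2⟩ := hp2
        have hne : p.1 ≠ p.2 := by
          intro h
          rw [h] at ha1
          exact ha2 ha1
        show (if p.1 < p.2 then p else (p.2, p.1)) ∈ G
        by_cases hlt : p.1 < p.2
        · rw [if_pos hlt, hG, mem_filter]
          refine ⟨Finset.mem_univ _, hlt, ?_⟩
          rw [ha1, mul_zero, add_zero]
          exact mul_ne_zero hl1 ha2
        · have hlt' : p.2 < p.1 := (not_lt.mp hlt).lt_of_ne hne.symm
          rw [if_neg hlt, hG, mem_filter]
          refine ⟨Finset.mem_univ _, hlt', ?_⟩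
          rw [ha1, mul_zero, zero_add]
          exact mul_ne_zero hl1 ha2
      · intro p hp p' hp' h
        rw [Finset.mem_coe, Finset.mem_product] at hp hp'
        obtain ⟨hp1, hp2⟩ := hp
        obtain ⟨hp1', hp2'⟩ := hp'
        simp only [hWdef, mem_filter] at hp1 hp1'
        simp only [hTfdef, mem_filter] at hp2 hp2'
        simp only at h
        split_ifs at h with h1 h2 h2
        · exact h
        · exfalso
          have : p.1 = p'.2 := by rw [h]
          rw [this] at hp1
          exact hp2'.2 hp1.2.2
        · exfalso
          have : p.2 = p'.1 := by rw [← h]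
          rw [← this] at hp1'
          exact hp2.2 hp1'.2.2
        · have e1 : p.2 = p'.2 := congrArg Prod.fst h
          have e2 : p.1 = p'.1 := congrArg Prod.snd h
          exact Prod.ext e2 e1
    refine le_trans (min_le_right _ _) ?_
    have hWr : (S.card : ℝ) / 2 ≤ W.card := by
      have : (S.card : ℝ) + 1 ≤ 2 * W.card := by exact_mod_cast hu
      linarith
    have hprod : (S.card : ℝ) * n / (2 * (Real.log n)^2)
        ≤ (W.card : ℝ) * Tf.card := by
      have heq : (S.card : ℝ) * n / (2 * (Real.log n)^2)
          = ((S.card : ℝ)/2) * ((n:ℝ)/(Real.log n)^2) := by ring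
      rw [heq]
      apply mul_le_mul hWr hTf.le
      · positivity
      · positivity
    calc (S.card : ℝ) * n / (2 * (Real.log n)^2) ≤ (W.card : ℝ) * Tf.card := hprod
      _ ≤ G.card := by exact_mod_cast hinj
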